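/- (Weierstrass Preparation) Let (A, m) be a complete Noetherian local ring and B = A[[t]]. If f = Σ_{i≥0} a_i t^i ∈ B is such that a_i ∈ m for all i < n and a_n ∉ m for some n ∈ ℕ, then f = u·f_0 where u is a unit in B and f_0 is a distinguished polynomial of degree n (i.e., f_0 = t^n + b_{n-1}t^{n-1} + ... + b_0 with all b_i ∈ m). Moreover u and f_0 are uniquely determined by f. -/

import Mathlib

open PowerSeries

namespace WPrep

variable {A : Type*} [CommRing A]

lemma coeff_mul_mem_right {J : Ideal A} {F : PowerSeries A}
    (h : ∀ i, PowerSeries.coeff i F ∈ J) (G : PowerSeries A) (i : ℕ) :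
    PowerSeries.coeff i (G * F) ∈ J := by
  rw [PowerSeries.coeff_mul]
  exact Ideal.sum_mem _ fun p _ => Ideal.mul_mem_left _ _ (h p.2)

lemma coeff_mul_mem_left {J : Ideal A} {F : PowerSeries A}
    (h : ∀ i, PowerSeries.coeff i F ∈ J) (G : PowerSeries A) (i : ℕ) :
    PowerSeries.coeff i (F * G) ∈ J := by
  rw [PowerSeries.coeff_mul]
  exact Ideal.sum_mem _ fun p _ => Ideal.mul_mem_right _ _ (h p.1)

lemma coeff_mul_mem_mul {J K : Ideal A} {F G : PowerSeries A}
    (hF : ∀ i, PowerSeries.coeff i F ∈ J) (hG : ∀ i, PowerSeries.coeff i G ∈ K) (i : ℕ) :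
    PowerSeries.coeff i (F * G) ∈ J * K := by
  rw [PowerSeries.coeff_mul]
  exact Ideal.sum_mem _ fun p _ => Ideal.mul_mem_mul (hF p.1) (hG p.2)

/-- `tau n F` is `F` with the first `n` coefficients removed, divided by `t^n`. -/
noncomputable def tau (n : ℕ) (F : PowerSeries A) : PowerSeries A :=
  PowerSeries.mk fun i => PowerSeries.coeff (i + n) F

@[simp] lemma coeff_tau (n i : ℕ) (F : PowerSeries A) :
    PowerSeries.coeff i (tau n F) = PowerSeries.coeff (i + n) F :=
  PowerSeries.coeff_mk _ _

lemma tau_sub (n : ℕ) (F G : PowerSeries A) : tau n (F - G) = tau n F - tau n G := by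
  ext i; simp

lemma tau_add (n : ℕ) (F G : PowerSeries A) : tau n (F + G) = tau n F + tau n G := by
  ext i; simp

lemma tau_X_pow_mul (n : ℕ) (G : PowerSeries A) : tau n ((X : PowerSeries A) ^ n * G) = G := by
  ext i; simp

/-- Weierstrass division, existence. -/
lemma division [IsLocalRing A] [IsAdicComplete (IsLocalRing.maximalIdeal A) A]
    (f : PowerSeries A) (n : ℕ)
    (h1 : ∀ i < n, PowerSeries.coeff i f ∈ IsLocalRing.maximalIdeal A)
    (h2 : PowerSeries.coeff n f ∉ IsLocalRing.maximalIdeal A)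
    (g : PowerSeries A) :
    ∃ Q : PowerSeries A, ∀ i, n ≤ i → PowerSeries.coeff i (g - Q * f) = 0 := by
  set I := IsLocalRing.maximalIdeal A with hI
  have hst : ∀ k : ℕ, (I ^ k • ⊤ : Submodule A A) = I ^ k := by simp
  -- the unit part
  have hu : IsUnit (tau n f) := by
    rw [PowerSeries.isUnit_iff_constantCoeff]
    have : constantCoeff (tau n f) = PowerSeries.coeff n f := by
      rw [← PowerSeries.coeff_zero_eq_constantCoeff]; simp
    rw [this]
    by_contra hnu
    exact h2 ((IsLocalRing.mem_maximalIdeal _).2 (mem_nonunits_iff.2 hnu))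
  obtain ⟨H, hH⟩ := hu
  set M : PowerSeries A := ((PowerSeries.trunc n f : Polynomial A) : PowerSeries A) with hMdef
  have hM : ∀ i, PowerSeries.coeff i M ∈ I := by
    intro i
    rw [hMdef, Polynomial.coeff_coe, PowerSeries.coeff_trunc]
    split
    · exact h1 i ‹_›
    · exact zero_mem _
  have hf : f = M + (X : PowerSeries A) ^ n * tau n f := by
    ext i
    rw [map_add, hMdef, Polynomial.coeff_coe, PowerSeries.coeff_trunc,
      PowerSeries.coeff_X_pow_mul']
    by_cases h : i < n
    · rw [if_pos h, if_neg (by omega), add_zero]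
    · rw [if_neg h, if_pos (by omega), coeff_tau, zero_add, Nat.sub_add_cancel (by omega)]
  -- key identity for tau of a multiple of f
  have htauf : ∀ q : PowerSeries A, tau n (q * f) = tau n (q * M) + q * tau n f := by
    intro q
    conv_lhs => rw [hf]
    rw [show q * (M + (X : PowerSeries A) ^ n * tau n f)
        = q * M + (X : PowerSeries A) ^ n * (q * tau n f) by ring,
      tau_add, tau_X_pow_mul]
  -- the iteration
  set T : PowerSeries A → PowerSeries A :=
    fun q => (↑H⁻¹ : PowerSeries A) * (tau n g - tau n (q * M)) with hT
  set qs : ℕ → PowerSeries A := fun k => T^[k] 0 with hqsdef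
  have hqs : ∀ k, qs (k + 1) = T (qs k) := fun k => Function.iterate_succ_apply' T k 0
  have hTf : ∀ q : PowerSeries A, tau n g - tau n (T q * f) = tau n ((q - T q) * M) := by
    intro q
    have hTh : T q * tau n f = tau n g - tau n (q * M) := by
      rw [hT, ← hH]
      calc (↑H⁻¹ : PowerSeries A) * (tau n g - tau n (q * M)) * ↑H
          = (↑H⁻¹ * ↑H : PowerSeries A) * (tau n g - tau n (q * M)) := by ring
        _ = tau n g - tau n (q * M) := by rw [← Units.val_mul, inv_mul_cancel, Units.val_one, one_mul]
    rw [htauf, hTh, sub_mul, tau_sub]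
    ring
  have C1 : ∀ k i, PowerSeries.coeff i (qs (k + 1) - qs k) ∈ I ^ k := by
    intro k
    induction k with
    | zero => intro i; simp
    | succ k ih =>
      intro i
      have hdiff : qs (k + 2) - qs (k + 1)
          = (↑H⁻¹ : PowerSeries A) * tau n ((qs k - qs (k + 1)) * M) := by
        rw [hqs (k + 1), hqs k, hT]
        simp only [sub_mul, tau_sub]
        ring
      rw [hdiff, pow_succ]
      refine coeff_mul_mem_right (fun j => ?_) _ _
      rw [coeff_tau]
      refine coeff_mul_mem_mul (fun j => ?_) hM _
      exact neg_mem_iff.1 (by simpa [neg_sub] using ih j)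
  have C2 : ∀ k l, k ≤ l → ∀ i,
      PowerSeries.coeff i (qs l) - PowerSeries.coeff i (qs k) ∈ I ^ k := by
    intro k l hkl
    induction l, hkl using Nat.le_induction with
    | base => intro i; rw [sub_self]; exact zero_mem _
    | succ l hkl ih =>
      intro i
      have : PowerSeries.coeff i (qs (l + 1)) - PowerSeries.coeff i (qs k)
          = (PowerSeries.coeff i (qs (l + 1)) - PowerSeries.coeff i (qs l))
            + (PowerSeries.coeff i (qs l) - PowerSeries.coeff i (qs k)) := by ring
      rw [this]
      refine add_mem (Ideal.pow_le_pow_right hkl ?_) (ih i)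
      rw [← map_sub]
      exact C1 l i
  -- construct the limit
  have hc : ∀ i : ℕ, ∃ L : A, ∀ k, PowerSeries.coeff i (qs k) ≡ L
      [SMOD (I ^ k • ⊤ : Submodule A A)] := by
    intro i
    refine IsPrecomplete.prec (IsAdicComplete.toIsPrecomplete) ?_
    intro a b hab
    rw [SModEq.sub_mem, hst]
    exact neg_mem_iff.1 (by simpa [neg_sub] using C2 a b hab i)
  choose L hL using hc
  refine ⟨PowerSeries.mk L, ?_⟩
  intro i hi
  obtain ⟨j, rfl⟩ : ∃ j, i = j + n := ⟨i - n, (Nat.sub_add_cancel hi).symm⟩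
  set Q : PowerSeries A := PowerSeries.mk L with hQdef
  -- coefficients of qs (k+1) - Q lie in I ^ k
  have hQk : ∀ k i, PowerSeries.coeff i (qs (k + 1) - Q) ∈ I ^ k := by
    intro k i
    rw [map_sub]
    have := (SModEq.sub_mem.1 (hL i (k + 1)))
    rw [hst] at this
    have hQc : PowerSeries.coeff i Q = L i := PowerSeries.coeff_mk _ _
    rw [hQc]
    exact Ideal.pow_le_pow_right (Nat.le_succ k) this
  refine IsHausdorff.haus (I := I) (M := A) IsAdicComplete.toIsHausdorff _ (fun k => ?_)
  rw [SModEq.zero, hst]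
  have hdec : g - Q * f = (g - qs (k + 1) * f) + (qs (k + 1) - Q) * f := by ring
  rw [hdec, map_add]
  refine add_mem ?_ (coeff_mul_mem_left (hQk k) f _)
  -- first part
  have h1' : PowerSeries.coeff (j + n) (g - qs (k + 1) * f)
      = PowerSeries.coeff j (tau n ((qs k - qs (k + 1)) * M)) := by
    rw [hqs k, ← hTf (qs k), ← tau_sub, coeff_tau]
  rw [h1', coeff_tau]
  refine coeff_mul_mem_left (fun j' => ?_) _ _
  exact neg_mem_iff.1 (by simpa [neg_sub] using C1 k j')

/-- Weierstrass division, uniqueness: if `q * f` is a polynomial of degree `< n`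
(i.e. all its coefficients in degrees `≥ n` vanish), then `q = 0`. -/
lemma eq_zero_of_mul [IsLocalRing A] [IsAdicComplete (IsLocalRing.maximalIdeal A) A]
    (f : PowerSeries A) (n : ℕ)
    (h1 : ∀ i < n, PowerSeries.coeff i f ∈ IsLocalRing.maximalIdeal A)
    (h2 : PowerSeries.coeff n f ∉ IsLocalRing.maximalIdeal A)
    (q : PowerSeries A) (hq : ∀ i, n ≤ i → PowerSeries.coeff i (q * f) = 0) : q = 0 := by
  set I := IsLocalRing.maximalIdeal A with hIdef
  have hst : ∀ k : ℕ, (I ^ k • ⊤ : Submodule A A) = I ^ k := by simp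
  have hun : IsUnit (PowerSeries.coeff n f) := by
    by_contra hnu
    exact h2 ((IsLocalRing.mem_maximalIdeal _).2 (mem_nonunits_iff.2 hnu))
  obtain ⟨v, hv⟩ := hun
  have key : ∀ k i, PowerSeries.coeff i q ∈ I ^ k := by
    intro k
    induction k with
    | zero => intro i; simp
    | succ k ih =>
      intro i
      induction i using Nat.strong_induction_on with
      | _ i ihi =>
        have h0 : PowerSeries.coeff (n + i) (q * f) = 0 := hq _ (by omega)
        rw [PowerSeries.coeff_mul] at h0
        have hin : (i, n) ∈ Finset.HasAntidiagonal.antidiagonal (n + i) :=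
          Finset.HasAntidiagonal.mem_antidiagonal.2 (by omega)
        have hsum := Finset.add_sum_erase (Finset.HasAntidiagonal.antidiagonal (n + i))
          (fun p => PowerSeries.coeff p.1 q * PowerSeries.coeff p.2 f) hin
        have hS : ∑ p ∈ (Finset.HasAntidiagonal.antidiagonal (n + i)).erase (i, n),
            PowerSeries.coeff p.1 q * PowerSeries.coeff p.2 f ∈ I ^ (k + 1) := by
          refine Ideal.sum_mem _ fun p hp => ?_
          have hps := Finset.HasAntidiagonal.mem_antidiagonal.1 (Finset.mem_of_mem_erase hp)
          have hne := Finset.ne_of_mem_erase hp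
          rcases lt_trichotomy p.1 i with h | h | h
          · exact Ideal.mul_mem_right _ _ (ihi p.1 h)
          · exact absurd (Prod.ext h (by omega)) hne
          · have hp2 : p.2 < n := by omega
            rw [pow_succ]
            exact Ideal.mul_mem_mul (ih p.1) (h1 p.2 hp2)
        have hterm : PowerSeries.coeff i q * PowerSeries.coeff n f ∈ I ^ (k + 1) := by
          have heq : PowerSeries.coeff i q * PowerSeries.coeff n f
              = -∑ p ∈ (Finset.HasAntidiagonal.antidiagonal (n + i)).erase (i, n),
                  PowerSeries.coeff p.1 q * PowerSeries.coeff p.2 f := by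
            exact eq_neg_of_add_eq_zero_left (hsum.trans h0)
          rw [heq]
          exact neg_mem hS
        have hdiv : PowerSeries.coeff i q
            = PowerSeries.coeff i q * PowerSeries.coeff n f * ↑v⁻¹ := by
          rw [← hv, Units.mul_inv_cancel_right]
        rw [hdiv]
        exact Ideal.mul_mem_right _ _ hterm
  ext i
  rw [map_zero]
  refine IsHausdorff.haus (I := I) (M := A) IsAdicComplete.toIsHausdorff _ fun k => ?_
  rw [SModEq.zero, hst]
  exact key k i

end WPrep


/-- Weierstrass Preparation Theorem: over a complete Noetherian local ring `(A, m)`, if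
`f = Σ a_i tⁱ ∈ A[[t]]` has `a_i ∈ m` for `i < n` and `a_n ∉ m`, then `f = u·f₀` with `u`
a unit of `A[[t]]` and `f₀` a distinguished polynomial of degree `n` (monic of degree `n`
with all lower coefficients in `m`), and `u`, `f₀` are uniquely determined by `f`. -/
theorem stmt_5 (A : Type*) [CommRing A] [IsLocalRing A] [IsNoetherianRing A]
    [IsAdicComplete (IsLocalRing.maximalIdeal A) A]
    (f : PowerSeries A) (n : ℕ)
    (h1 : ∀ i < n, PowerSeries.coeff i f ∈ IsLocalRing.maximalIdeal A)
    (h2 : PowerSeries.coeff n f ∉ IsLocalRing.maximalIdeal A) :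
    ∃! uf : (PowerSeries A)ˣ × Polynomial A,
      uf.2.Monic ∧ uf.2.natDegree = n ∧
      (∀ i < n, uf.2.coeff i ∈ IsLocalRing.maximalIdeal A) ∧
      f = (uf.1 : PowerSeries A) * (uf.2 : PowerSeries A) := by
  classical
  set I := IsLocalRing.maximalIdeal A with hIdef
  obtain ⟨Q, hQ⟩ := WPrep.division f n h1 h2 ((PowerSeries.X : PowerSeries A) ^ n)
  set D : PowerSeries A := (PowerSeries.X : PowerSeries A) ^ n - Q * f with hD
  set r : Polynomial A := PowerSeries.trunc n D with hr
  have hrD : (r : PowerSeries A) = D := by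
    ext i
    rw [hr, Polynomial.coeff_coe, PowerSeries.coeff_trunc]
    split
    · rfl
    · exact (hQ i (by omega)).symm
  have hrdeg : r.degree < (n : WithBot ℕ) := PowerSeries.degree_trunc_lt D n
  set p : Polynomial A := Polynomial.X ^ n - r with hp
  have hpc : (p : PowerSeries A) = Q * f := by
    rw [hp, Polynomial.coe_sub, Polynomial.coe_pow, Polynomial.coe_X, hrD, hD]
    ring
  have hdeg : p.degree = n := by
    rw [hp, Polynomial.degree_sub_eq_left_of_degree_lt, Polynomial.degree_X_pow]
    rw [Polynomial.degree_X_pow]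
    exact hrdeg
  have hnat : p.natDegree = n := Polynomial.natDegree_eq_of_degree_eq_some hdeg
  have hmon : p.Monic := by
    have : p.coeff n = 1 := by
      rw [hp, Polynomial.coeff_sub, Polynomial.coeff_X_pow, if_pos rfl,
        Polynomial.coeff_eq_zero_of_degree_lt hrdeg, sub_zero]
    rwa [Polynomial.Monic, Polynomial.leadingCoeff, hnat]
  have hQf : ∀ i < n, PowerSeries.coeff i (Q * f) ∈ I := by
    intro i hi
    rw [PowerSeries.coeff_mul]
    refine Ideal.sum_mem _ fun pr hpr => ?_
    have := Finset.HasAntidiagonal.mem_antidiagonal.1 hpr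
    exact Ideal.mul_mem_left _ _ (h1 pr.2 (by omega))
  have hco : ∀ i < n, p.coeff i ∈ I := by
    intro i hi
    have hri : r.coeff i = - PowerSeries.coeff i (Q * f) := by
      have := congrArg (PowerSeries.coeff i) hrD
      rwa [Polynomial.coeff_coe, hD, map_sub, PowerSeries.coeff_X_pow,
        if_neg (by omega), zero_sub] at this
    rw [hp, Polynomial.coeff_sub, Polynomial.coeff_X_pow, if_neg (by omega), hri, zero_sub,
      neg_neg]
    exact hQf i hi
  -- Q is a unit
  have hQn : PowerSeries.coeff n (Q * f) = 1 := by
    have h := hQ n le_rfl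
    rw [map_sub, PowerSeries.coeff_X_pow, if_pos rfl] at h
    exact (sub_eq_zero.1 h).symm
  have hQ0 : IsUnit (PowerSeries.constantCoeff Q) := by
    by_contra h0
    have hmem : PowerSeries.constantCoeff Q ∈ I :=
      (IsLocalRing.mem_maximalIdeal _).2 (mem_nonunits_iff.2 h0)
    have hone : (1 : A) ∈ I := by
      rw [← hQn, PowerSeries.coeff_mul]
      refine Ideal.sum_mem _ fun pr hpr => ?_
      have hps := Finset.HasAntidiagonal.mem_antidiagonal.1 hpr
      rcases Nat.eq_zero_or_pos pr.1 with h | h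
      · have : pr.2 = n := by omega
        refine Ideal.mul_mem_right _ _ ?_
        rw [h, PowerSeries.coeff_zero_eq_constantCoeff_apply]
        exact hmem
      · exact Ideal.mul_mem_left _ _ (h1 pr.2 (by omega))
    exact (Ideal.IsMaximal.ne_top (IsLocalRing.maximalIdeal.isMaximal A))
      ((Ideal.eq_top_iff_one _).2 hone)
  obtain ⟨QU, hQU⟩ := PowerSeries.isUnit_iff_constantCoeff.2 hQ0
  have hfu : f = ((QU⁻¹ : (PowerSeries A)ˣ) : PowerSeries A) * (p : PowerSeries A) := by
    rw [hpc, ← hQU, ← mul_assoc, ← Units.val_mul, inv_mul_cancel, Units.val_one, one_mul]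
  refine ⟨(QU⁻¹, p), ⟨hmon, hnat, hco, hfu⟩, ?_⟩
  rintro ⟨u', p'⟩ ⟨hmon', hnat', hco', hfu'⟩
  -- uniqueness
  have hp'c : (p' : PowerSeries A) = ((u'⁻¹ : (PowerSeries A)ˣ) : PowerSeries A) * f := by
    rw [hfu', ← mul_assoc, ← Units.val_mul, inv_mul_cancel, Units.val_one, one_mul]
  set r' : Polynomial A := Polynomial.X ^ n - p' with hr'
  have hr'deg : r'.degree < (n : WithBot ℕ) := by
    rw [hr', ← Polynomial.degree_X_pow (R := A) n]
    refine Polynomial.degree_sub_lt ?_ ((Polynomial.monic_X_pow n).ne_zero) ?_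
    · rw [Polynomial.degree_X_pow, Polynomial.degree_eq_natDegree hmon'.ne_zero, hnat']
    · rw [Polynomial.monic_X_pow n, hmon']
  have hkey : (Q - ((u'⁻¹ : (PowerSeries A)ˣ) : PowerSeries A)) * f
      = (r' : PowerSeries A) - (r : PowerSeries A) := by
    rw [sub_mul, ← hp'c, hrD, hD, hr', Polynomial.coe_sub, Polynomial.coe_pow,
      Polynomial.coe_X]
    ring
  have hzero : Q - ((u'⁻¹ : (PowerSeries A)ˣ) : PowerSeries A) = 0 := by
    refine WPrep.eq_zero_of_mul f n h1 h2 _ fun i hi => ?_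
    rw [hkey, map_sub, Polynomial.coeff_coe, Polynomial.coeff_coe,
      Polynomial.coeff_eq_zero_of_degree_lt (lt_of_lt_of_le hr'deg (Nat.cast_le.2 hi)),
      Polynomial.coeff_eq_zero_of_degree_lt (lt_of_lt_of_le hrdeg (Nat.cast_le.2 hi)),
      sub_zero]
  have hQeq : Q = ((u'⁻¹ : (PowerSeries A)ˣ) : PowerSeries A) := sub_eq_zero.1 hzero
  have hrr' : (r' : PowerSeries A) = (r : PowerSeries A) := by
    have h' := hkey
    rw [hzero, zero_mul] at h'
    exact sub_eq_zero.1 h'.symm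
  have hrr'' : r' = r := Polynomial.coe_inj.1 hrr'
  have hpp' : p' = p := by
    rw [hp, ← hrr'']
    rw [hr']
    ring
  have huu' : u' = QU⁻¹ := by
    have : QU = u'⁻¹ := Units.ext (hQU.trans hQeq)
    rw [this, inv_inv]
  rw [Prod.mk.injEq]
  exact ⟨huu', hpp'⟩
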